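/- Let E be a real normed vector space, let f : E → ℝ be twice continuously differentiable, let θ̃, ξ_1, …, ξ_T ∈ E, and let β_1, …, β_T ∈ ℝ with ∑_{t=1}^T β_t = 1 and ∑_{t=1}^T β_t ξ_t = 0. Then the function g(ε) = ∑_{t=1}^T β_t f(θ̃ + ε ξ_t) − f(θ̃) satisfies g(ε) = O(ε²) as ε → 0; that is, there exist C > 0 and δ > 0 such that |g(ε)| ≤ C ε² for all |ε| ≤ δ. -/

import Mathlib

/-- sufficiency in Proposition 1. For twice continuously
differentiable `f : E → ℝ`, coefficients `β` with `∑ β t = 1` and offsets with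
`∑ β t • ξ t = 0`, the ensembling–merging gap
`g ε = ∑ β t * f (θ̃ + ε • ξ t) - f θ̃` is `O(ε²)` as `ε → 0`: there are
`C > 0` and `δ > 0` with `|g ε| ≤ C * ε²` for all `|ε| ≤ δ`. -/
theorem ensemble_merge_gap_second_order
    {E : Type*} [NormedAddCommGroup E] [NormedSpace ℝ E]
    (f : E → ℝ) (hf : ContDiff ℝ 2 f)
    (T : ℕ) (θmerged : E) (ξ : Fin T → E) (β : Fin T → ℝ)
    (hβ : ∑ t, β t = 1) (hξ : ∑ t, β t • ξ t = 0) :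
    ∃ C > 0, ∃ δ > 0, ∀ ε : ℝ, |ε| ≤ δ →
      |∑ t, β t * f (θmerged + ε • ξ t) - f θmerged| ≤ C * ε ^ 2 := by
  classical
  set g : ℝ → ℝ := fun ε => ∑ t, β t * f (θmerged + ε • ξ t) - f θmerged with hg_def
  have hg : ContDiff ℝ 2 g := by
    apply ContDiff.sub _ contDiff_const
    apply ContDiff.sum
    intro t _
    exact contDiff_const.mul (hf.comp (contDiff_const.add (contDiff_id.smul contDiff_const)))
  have hg0 : g 0 = 0 := by
    simp [hg_def, ← Finset.sum_mul, hβ]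
  have hderiv0 : HasDerivAt g 0 0 := by
    have hD := (hf.differentiable (by norm_num)).differentiableAt (x := θmerged)
    have hterm : ∀ t : Fin T, HasDerivAt (fun ε : ℝ => f (θmerged + ε • ξ t))
        (fderiv ℝ f θmerged (ξ t)) 0 := by
      intro t
      have h1 : HasDerivAt (fun ε : ℝ => θmerged + ε • ξ t) (ξ t) 0 := by
        simpa using ((hasDerivAt_id (0:ℝ)).smul_const (ξ t)).const_add θmerged
      have h0 : θmerged = θmerged + (0:ℝ) • ξ t := by simp
      have hD' : HasFDerivAt f (fderiv ℝ f θmerged) (θmerged + (0:ℝ) • ξ t) := by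
        rw [← h0]; exact hD.hasFDerivAt
      exact hD'.comp_hasDerivAt 0 h1
    have hsum : HasDerivAt g (∑ t, β t * fderiv ℝ f θmerged (ξ t)) 0 := by
      apply HasDerivAt.sub_const
      exact HasDerivAt.fun_sum fun t _ => (hterm t).const_mul (β t)
    have hz : ∑ t, β t * fderiv ℝ f θmerged (ξ t) = 0 := by
      have hm : (fderiv ℝ f θmerged) (∑ t, β t • ξ t)
          = ∑ t, β t * (fderiv ℝ f θmerged) (ξ t) := by
        rw [map_sum]; simp [smul_eq_mul]
      rw [← hm, hξ, map_zero]
    rw [hz] at hsum; exact hsum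
  have hdg0 : deriv g 0 = 0 := hderiv0.deriv
  have hgd : ContDiff ℝ 1 (deriv g) := by
    exact (contDiff_succ_iff_deriv.mp (show ContDiff ℝ (1+1) g from hg)).2.2
  set d2 := deriv (deriv g) 0 with hd2_def
  have hd2 : HasDerivAt (deriv g) d2 0 :=
    ((hgd.differentiable (by norm_num)) 0).hasDerivAt
  have hlo : (fun ε => deriv g ε - deriv g 0 - (ε - 0) • d2) =o[nhds 0] fun ε => ε - 0 :=
    hasDerivAt_iff_isLittleO.mp hd2
  have hev : ∀ᶠ ε in nhds (0:ℝ), |deriv g ε| ≤ (|d2| + 1) * |ε| := by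
    filter_upwards [hlo.def one_pos] with ε hε
    have h1 : |deriv g ε - ε * d2| ≤ |ε| := by
      simpa [hdg0, Real.norm_eq_abs, smul_eq_mul] using hε
    have h2 : |deriv g ε| - |ε * d2| ≤ |deriv g ε - ε * d2| := abs_sub_abs_le_abs_sub _ _
    have h3 : |ε * d2| = |ε| * |d2| := abs_mul _ _
    nlinarith [abs_nonneg ε, abs_nonneg d2]
  obtain ⟨η, hη, hball⟩ := Metric.eventually_nhds_iff.mp hev
  refine ⟨|d2| + 1, by positivity, η / 2, by positivity, ?_⟩
  intro ε hε
  have key : ∀ x ∈ Metric.closedBall (0:ℝ) |ε|, ‖deriv g x‖ ≤ (|d2| + 1) * |ε| := by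
    intro x hx
    rw [Metric.mem_closedBall, Real.dist_eq, sub_zero] at hx
    have hx' : dist x 0 < η := by
      rw [Real.dist_eq, sub_zero]; linarith
    have := hball hx'
    rw [Real.norm_eq_abs]
    calc |deriv g x| ≤ (|d2| + 1) * |x| := this
      _ ≤ (|d2| + 1) * |ε| := by
          apply mul_le_mul_of_nonneg_left hx (by positivity)
  have hdif : ∀ x ∈ Metric.closedBall (0:ℝ) |ε|, DifferentiableAt ℝ g x := fun x _ =>
    (hg.differentiable (by norm_num)) x
  have hmvt := (convex_closedBall (0:ℝ) |ε|).norm_image_sub_le_of_norm_deriv_le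
      hdif key (Metric.mem_closedBall_self (abs_nonneg ε))
      (by rw [Metric.mem_closedBall, Real.dist_eq, sub_zero])
  have hε2 : |ε| * |ε| = ε ^ 2 := by rw [abs_mul_abs_self, sq]
  have : |g ε| ≤ (|d2| + 1) * |ε| * |ε| := by
    simpa [hg0, Real.norm_eq_abs] using hmvt
  calc |∑ t, β t * f (θmerged + ε • ξ t) - f θmerged| = |g ε| := by rw [hg_def]
    _ ≤ (|d2| + 1) * |ε| * |ε| := this
    _ = (|d2| + 1) * ε ^ 2 := by rw [mul_assoc, hε2]
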